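/- (Gaussian flux, three dimensions) Let x ∈ ℝ². For every t > 0, ∫₀ᵗ ∫_{ℝ²} 2·e^{−|y|²} · exp(−|x−y|²/(4s))/(4πs)^{3/2} dy ds = (e^{−|x|²}/√π) · ∫₀ᵗ (1/(√s·(4s + 1))) · exp(4|x|²s/(4s + 1)) ds. This gives the surface temperature at boundary position x and time t produced by the time-independent Gaussian boundary flux q(s,y) = e^{−|y|²} on the half-space in ℝ³. -/

import Mathlib

open Real MeasureTheory Set

/-- (Gaussian flux, three dimensions) The surface temperature produced on the
half-space in ℝ³ by the time-independent Gaussian boundary flux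
`q(s,y) = e^{−|y|²}`, with the boundary identified with ℝ². -/
theorem gaussian_flux_three_dimensions (x : EuclideanSpace ℝ (Fin 2)) :
    ∀ t : ℝ, 0 < t →
      (∫ s in Ioo (0:ℝ) t, ∫ y : EuclideanSpace ℝ (Fin 2),
          2 * Real.exp (-‖y‖ ^ 2) * Real.exp (-‖x - y‖ ^ 2 / (4 * s))
            / (4 * π * s) ^ ((3:ℝ)/2))
        = Real.exp (-‖x‖ ^ 2) / Real.sqrt π
            * ∫ s in Ioo (0:ℝ) t,
                1 / (Real.sqrt s * (4 * s + 1)) * Real.exp (4 * ‖x‖ ^ 2 * s / (4 * s + 1)) := by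
  intro t ht
  rw [← MeasureTheory.integral_const_mul]
  refine setIntegral_congr_fun measurableSet_Ioo (fun s hs => ?_)
  obtain ⟨hs0, -⟩ := hs
  have hπ : (0:ℝ) < π := Real.pi_pos
  have h4s : (0:ℝ) < 4 * s := by linarith
  have h4s1 : (0:ℝ) < 4 * s + 1 := by linarith
  set a : ℝ := (4 * s + 1) / (4 * s) with ha
  have ha0 : 0 < a := by positivity
  set c : EuclideanSpace ℝ (Fin 2) := (1 / (4 * s + 1)) • x with hc
  have key : ∀ y : EuclideanSpace ℝ (Fin 2),
      2 * Real.exp (-‖y‖ ^ 2) * Real.exp (-‖x - y‖ ^ 2 / (4 * s)) / (4 * π * s) ^ ((3:ℝ)/2)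
        = (2 / (4 * π * s) ^ ((3:ℝ)/2) * Real.exp (-‖x‖ ^ 2 / (4 * s + 1)))
            * Real.exp (-a * ‖y - c‖ ^ 2) := by
    intro y
    have hexp : Real.exp (-‖y‖ ^ 2) * Real.exp (-‖x - y‖ ^ 2 / (4 * s))
        = Real.exp (-‖x‖ ^ 2 / (4 * s + 1)) * Real.exp (-a * ‖y - c‖ ^ 2) := by
      rw [← Real.exp_add, ← Real.exp_add]
      congr 1
      have h1 : ‖x - y‖ ^ 2 = ‖x‖ ^ 2 - 2 * inner ℝ x y + ‖y‖ ^ 2 := norm_sub_sq_real x y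
      have h2 : ‖y - c‖ ^ 2 = ‖y‖ ^ 2 - 2 * ((1 / (4 * s + 1)) * inner ℝ x y) + (1 / (4 * s + 1)) ^ 2 * ‖x‖ ^ 2 := by
        rw [norm_sub_sq_real y c, hc, real_inner_smul_right, norm_smul]
        rw [real_inner_comm]
        rw [mul_pow, norm_div, norm_one, Real.norm_eq_abs, abs_of_pos h4s1]
        try ring
      rw [h1, h2, ha]
      field_simp
      ring
    rw [mul_assoc, hexp]
    ring
  simp_rw [key]
  rw [MeasureTheory.integral_const_mul]
  have hint : (∫ y : EuclideanSpace ℝ (Fin 2), Real.exp (-a * ‖y - c‖ ^ 2)) = π / a := by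
    rw [integral_sub_right_eq_self (fun y : EuclideanSpace ℝ (Fin 2) => Real.exp (-a * ‖y‖ ^ 2)) c]
    rw [GaussianFourier.integral_rexp_neg_mul_sq_norm ha0, finrank_euclideanSpace_fin]
    norm_num
  rw [hint]
  -- now a scalar identity
  have hsqrt_s : (0:ℝ) < Real.sqrt s := Real.sqrt_pos.2 hs0
  have hsqrt_pi : (0:ℝ) < Real.sqrt π := Real.sqrt_pos.2 hπ
  have hrpow : (4 * π * s) ^ ((3:ℝ)/2) = (4 * π * s) * (2 * Real.sqrt π * Real.sqrt s) := by
    have h4πs : (0:ℝ) < 4 * π * s := by positivity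
    have : ((3:ℝ)/2) = 1 + 1/2 := by norm_num
    rw [this, Real.rpow_add h4πs, Real.rpow_one]
    congr 1
    rw [show (4 * π * s) ^ ((1:ℝ)/2) = Real.sqrt (4 * π * s) by
      rw [Real.sqrt_eq_rpow]]
    rw [show (4:ℝ) * π * s = (2 * Real.sqrt π * Real.sqrt s) ^ 2 by
      rw [mul_pow, mul_pow, Real.sq_sqrt hπ.le, Real.sq_sqrt hs0.le]; ring]
    exact Real.sqrt_sq (by positivity)
  have hexp2 : Real.exp (-‖x‖ ^ 2 / (4 * s + 1))
      = Real.exp (-‖x‖ ^ 2) * Real.exp (4 * ‖x‖ ^ 2 * s / (4 * s + 1)) := by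
    rw [← Real.exp_add]
    congr 1
    field_simp
    ring
  rw [hrpow, hexp2, ha]
  field_simp
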